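/- Let G = (U, α) and H = (V, β) be connected weighted graphs, and let γ ∈ J(α,β) be an extreme point of J(α,β). Then the weighted graph K = (supp(r_γ), γ) is connected; that is, for any two pairs (u,v), (u',v') ∈ U × V with r_γ(u,v) > 0 and r_γ(u',v') > 0, there is a finite sequence of pairs starting at (u,v) and ending at (u',v') such that γ assigns positive weight to each consecutive pair of pairs. -/
import Mathlib


open Finset


lemma exists_walk_of_reflTransGen {X : Type*} {r : X → X → Prop} {a b : X}
    (h : Relation.ReflTransGen r a b) :
    ∃ n, ∃ w : Fin (n + 1) → X, w 0 = a ∧ w (Fin.last n) = b ∧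
      ∀ i : Fin n, r (w i.castSucc) (w i.succ) := by
  induction h with
  | refl => exact ⟨0, fun _ => a, rfl, rfl, fun i => i.elim0⟩
  | @tail b c hab hbc ih =>
    obtain ⟨n, w, hw0, hwl, hwe⟩ := ih
    refine ⟨n + 1, Fin.snoc w c, ?_, ?_, ?_⟩
    · rw [show (0 : Fin (n+2)) = Fin.castSucc 0 from (Fin.castSucc_zero).symm,
        Fin.snoc_castSucc]
      exact hw0
    · simp [Fin.snoc_last]
    · intro i
      refine Fin.lastCases ?_ ?_ i
      · rw [Fin.succ_last, Fin.snoc_castSucc, Fin.snoc_last, hwl]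
        exact hbc
      · intro j
        rw [Fin.succ_castSucc, Fin.snoc_castSucc, Fin.snoc_castSucc]
        exact hwe j


def IsWeightFunction {U : Type*} [Fintype U] (α : U → U → ℝ) : Prop :=
  (∀ u u', 0 ≤ α u u') ∧ (∀ u u', α u u' = α u' u) ∧ (∑ u, ∑ u', α u u' = 1)

noncomputable def marginal {U : Type*} [Fintype U] (α : U → U → ℝ) (u : U) : ℝ :=
  ∑ u', α u u'

def IsWeightJoining {U V : Type*} [Fintype U] [Fintype V]
    (α : U → U → ℝ) (β : V → V → ℝ) (γ : U × V → U × V → ℝ) : Prop :=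
  IsWeightFunction γ ∧
  (∀ u, ∑ v, marginal γ (u, v) = marginal α u) ∧
  (∀ v, ∑ u, marginal γ (u, v) = marginal β v) ∧
  (∀ u u' v, marginal α u * ∑ v', γ (u, v) (u', v') = α u u' * marginal γ (u, v)) ∧
  (∀ v v' u, marginal β v * ∑ u', γ (u, v) (u', v') = β v v' * marginal γ (u, v))

def weightJoinings {U V : Type*} [Fintype U] [Fintype V]
    (α : U → U → ℝ) (β : V → V → ℝ) : Set (U × V → U × V → ℝ) :=
  {γ | IsWeightJoining α β γ}

noncomputable def ogjCost {U V : Type*} [Fintype U] [Fintype V]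
    (c : U → V → ℝ) (γ : U × V → U × V → ℝ) : ℝ :=
  ∑ p : U × V, c p.1 p.2 * marginal γ p

/-- A weighted graph `(U, α)` is connected if any two distinct vertices are joined by
a path of positive-weight edges. -/
def IsConnectedWeight {U : Type*} [Fintype U] (α : U → U → ℝ) : Prop :=
  ∀ u u' : U, u ≠ u' → ∃ n, ∃ w : Fin (n + 1) → U, w 0 = u ∧ w (Fin.last n) = u' ∧
    ∀ i : Fin n, 0 < α (w i.castSucc) (w i.succ)

/-- `γ` is an extreme point of the convex set `C`. -/
def IsExtremePointOf {X : Type*} [AddCommGroup X] [Module ℝ X] (C : Set X) (γ : X) : Prop :=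
  γ ∈ C ∧ ∀ γ₁ ∈ C, ∀ γ₂ ∈ C, ∀ t : ℝ, 0 < t → t < 1 →
    γ = t • γ₁ + (1 - t) • γ₂ → γ = γ₁ ∧ γ = γ₂

lemma key_marginal {U V : Type*} [Fintype U] [Fintype V]
    (α : U → U → ℝ) (hα : IsWeightFunction α) (hconn : IsConnectedWeight α)
    (γ : U × V → U × V → ℝ)
    (hnn : ∀ x y, 0 ≤ γ x y) (hsym : ∀ x y, γ x y = γ y x)
    (ht : ∀ u u' v, marginal α u * ∑ v', γ (u, v) (u', v') = α u u' * marginal γ (u, v))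
    (hαtot : ∑ u, ∑ u', α u u' = 1)
    (C : Set (U × V)) [DecidablePred (· ∈ C)]
    (hC : ∀ x y, x ∈ C → 0 < γ x y → y ∈ C) :
    ∀ u, (∑ v, if (u, v) ∈ C then marginal γ (u, v) else 0)
      = (∑ x : U × V, if x ∈ C then marginal γ x else 0) * marginal α u := by
  classical
  set p : U → ℝ := marginal α with hp
  set g : U → ℝ := fun u => ∑ v, if (u, v) ∈ C then marginal γ (u, v) else 0 with hg
  have hγ0 : ∀ x y, x ∈ C → y ∉ C → γ x y = 0 := by
    intro x y hx hy
    by_contra h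
    exact hy (hC x y hx (lt_of_le_of_ne (hnn x y) (Ne.symm h)))
  -- Step A
  have hstep : ∀ u u', 0 < α u u' → g u * p u' = g u' * p u := by
    intro u u' huu'
    have hA : ∀ (a b : U), (∑ v, if (a, v) ∈ C then (∑ v', γ (a, v) (b, v')) else 0)
        = ∑ v, ∑ v', if (a, v) ∈ C ∧ (b, v') ∈ C then γ (a, v) (b, v') else 0 := by
      intro a b
      refine Finset.sum_congr rfl fun v _ => ?_
      by_cases h : (a, v) ∈ C
      · simp only [h, if_true, true_and]
        refine Finset.sum_congr rfl fun v' _ => ?_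
        by_cases h' : (b, v') ∈ C
        · simp [h']
        · simp [h', hγ0 _ _ h h']
      · simp [h]
    have key1 : ∀ a b, α a b * g a = p a * ∑ v, ∑ v', if (a, v) ∈ C ∧ (b, v') ∈ C then γ (a, v) (b, v') else 0 := by
      intro a b
      rw [← hA]
      rw [hg]
      simp only [Finset.mul_sum, mul_ite, mul_zero]
      refine Finset.sum_congr rfl fun v _ => ?_
      by_cases h : (a, v) ∈ C
      · simp only [h, if_true]
        rw [← Finset.mul_sum, ht a b v]
      · simp [h]
    have hswap : (∑ v, ∑ v', if (u, v) ∈ C ∧ (u', v') ∈ C then γ (u, v) (u', v') else 0)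
        = ∑ v', ∑ v, if (u', v') ∈ C ∧ (u, v) ∈ C then γ (u', v') (u, v) else 0 := by
      rw [Finset.sum_comm]
      refine Finset.sum_congr rfl fun v' _ => Finset.sum_congr rfl fun v _ => ?_
      rw [hsym (u, v) (u', v')]
      exact if_congr and_comm rfl rfl
    have h1 := key1 u u'
    have h2 := key1 u' u
    rw [hswap] at h1
    have hαs : α u u' = α u' u := hα.2.1 u u'
    have : α u' u * (g u * p u') = α u' u * (g u' * p u) := by
      calc α u' u * (g u * p u') = (α u u' * g u) * p u' := by rw [hαs]; ring
      _ = (p u * ∑ v', ∑ v, if (u', v') ∈ C ∧ (u, v) ∈ C then γ (u', v') (u, v) else 0) * p u' := by rw [h1]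
      _ = (α u' u * g u') * p u := by rw [h2]; ring
      _ = α u' u * (g u' * p u) := by ring
    have hne : α u' u ≠ 0 := by rw [← hαs]; exact ne_of_gt huu'
    exact mul_left_cancel₀ hne this
  -- Step B: chain
  have hchain : ∀ a b : U, g a * p b = g b * p a := by
    intro a b
    rcases eq_or_ne a b with rfl | hab
    · rfl
    obtain ⟨n, w, hw0, hwl, hwe⟩ := hconn a b hab
    have main : ∀ k : ℕ, (hk : k ≤ n) →
        g (w 0) * p (w ⟨k, Nat.lt_succ_of_le hk⟩) = g (w ⟨k, Nat.lt_succ_of_le hk⟩) * p (w 0) := by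
      intro k
      induction k with
      | zero => intro hk; simp [Fin.mk_zero]
      | succ k ih =>
        intro hk
        have hk' : k ≤ n := Nat.le_of_succ_le hk
        have hkn : k < n := hk
        have IH := ih hk'
        set i : Fin n := ⟨k, hkn⟩ with hi
        have hedge := hwe i
        have hcs : i.castSucc = (⟨k, Nat.lt_succ_of_le hk'⟩ : Fin (n+1)) := rfl
        have hsc : i.succ = (⟨k+1, Nat.lt_succ_of_le hk⟩ : Fin (n+1)) := rfl
        rw [hcs, hsc] at hedge
        set wk := w ⟨k, Nat.lt_succ_of_le hk'⟩
        set wk1 := w ⟨k+1, Nat.lt_succ_of_le hk⟩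
        have hpk : 0 < p wk := by
          have := Finset.single_le_sum (f := fun u' => α wk u') (fun u' _ => hα.1 wk u') (Finset.mem_univ wk1)
          exact lt_of_lt_of_le hedge this
        have h1 := hstep wk wk1 hedge
        have := mul_left_cancel₀ (ne_of_gt hpk) (show p wk * (g (w 0) * p wk1) = p wk * (g wk1 * p (w 0)) by
          linear_combination p (w 0) * h1 + p wk1 * IH)
        exact this
    have := main n le_rfl
    rw [show (⟨n, Nat.lt_succ_of_le le_rfl⟩ : Fin (n+1)) = Fin.last n from rfl, hw0, hwl] at this
    exact this
  -- conclude
  intro u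
  have hsum_g : ∑ u', g u' = ∑ x : U × V, if x ∈ C then marginal γ x else 0 := by
    rw [Fintype.sum_prod_type]
  have hsum_p : ∑ u', p u' = 1 := by
    rw [hp]
    simpa [marginal] using hαtot
  calc g u = g u * ∑ u', p u' := by rw [hsum_p, mul_one]
    _ = ∑ u', g u * p u' := by rw [Finset.mul_sum]
    _ = ∑ u', g u' * p u := Finset.sum_congr rfl fun u' _ => hchain u u'
    _ = (∑ u', g u') * p u := by rw [Finset.sum_mul]
    _ = _ := by rw [hsum_g]

lemma restrict_join {U V : Type*} [Fintype U] [Fintype V]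
    (α : U → U → ℝ) (β : V → V → ℝ)
    (hα : IsWeightFunction α) (hβ : IsWeightFunction β)
    (hGconn : IsConnectedWeight α) (hHconn : IsConnectedWeight β)
    (γ : U × V → U × V → ℝ) (hJ : IsWeightJoining α β γ)
    (C : Set (U × V)) [DecidablePred (· ∈ C)]
    (hC : ∀ x y, x ∈ C → 0 < γ x y → y ∈ C)
    (t : ℝ) (htdef : t = ∑ x : U × V, if x ∈ C then marginal γ x else 0)
    (ht0 : 0 < t) :
    IsWeightJoining α β (fun x y => if x ∈ C ∧ y ∈ C then γ x y / t else 0) ∧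
    (∀ x, marginal (fun x y => if x ∈ C ∧ y ∈ C then γ x y / t else 0) x
        = if x ∈ C then marginal γ x / t else 0) := by
  obtain ⟨⟨hnn, hsym, htot⟩, hm1, hm2, ht1, ht2⟩ := hJ
  have hγ0 : ∀ x y, x ∈ C → y ∉ C → γ x y = 0 := by
    intro x y hx hy
    by_contra h
    exact hy (hC x y hx (lt_of_le_of_ne (hnn x y) (Ne.symm h)))
  set γ₁ : U × V → U × V → ℝ := fun x y => if x ∈ C ∧ y ∈ C then γ x y / t else 0 with hγ₁
  -- marginal formula
  have hmar : ∀ x, marginal γ₁ x = if x ∈ C then marginal γ x / t else 0 := by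
    intro x
    by_cases hx : x ∈ C
    · rw [if_pos hx]
      show (∑ y, if x ∈ C ∧ y ∈ C then γ x y / t else 0) = (∑ y, γ x y) / t
      rw [Finset.sum_div]
      refine Finset.sum_congr rfl fun y _ => ?_
      by_cases hy : y ∈ C
      · rw [if_pos ⟨hx, hy⟩]
      · rw [if_neg (fun h => hy h.2), hγ0 x y hx hy, zero_div]
    · rw [if_neg hx]
      show (∑ y, if x ∈ C ∧ y ∈ C then γ x y / t else 0) = 0
      refine Finset.sum_eq_zero fun y _ => if_neg (fun h => hx h.1)
  -- key lemma, U side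
  have kU := key_marginal α hα hGconn γ hnn hsym ht1 hα.2.2 C hC
  -- key lemma, V side (swap)
  set γs : V × U → V × U → ℝ := fun x y => γ (x.2, x.1) (y.2, y.1) with hγs
  have hmargs : ∀ x : V × U, marginal γs x = marginal γ (x.2, x.1) := by
    intro x
    exact Fintype.sum_equiv (Equiv.prodComm V U) _ _ (fun y => rfl)
  set Cs : Set (V × U) := {x | (x.2, x.1) ∈ C} with hCs
  haveI : DecidablePred (· ∈ Cs) := fun x => (inferInstance : Decidable ((x.2, x.1) ∈ C))
  have kV := key_marginal β hβ hHconn γs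
    (fun x y => hnn _ _) (fun x y => hsym _ _)
    (fun v v' u => by
      rw [hmargs]
      exact ht2 v v' u)
    hβ.2.2 Cs
    (fun x y hx hxy => hC _ _ hx hxy)
  have hts : t = ∑ x : V × U, if x ∈ Cs then marginal γs x else 0 := by
    rw [htdef]
    refine Fintype.sum_equiv (Equiv.prodComm U V) _ _ (fun x => ?_)
    exact if_congr Iff.rfl (hmargs ((Equiv.prodComm U V) x)).symm rfl
  refine ⟨⟨⟨?_, ?_, ?_⟩, ?_, ?_, ?_, ?_⟩, hmar⟩
  · -- nonneg
    intro x y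
    simp only [hγ₁]
    by_cases h : x ∈ C ∧ y ∈ C
    · rw [if_pos h]; exact div_nonneg (hnn x y) ht0.le
    · rw [if_neg h]
  · -- symm
    intro x y
    show (if x ∈ C ∧ y ∈ C then γ x y / t else 0) = (if y ∈ C ∧ x ∈ C then γ y x / t else 0)
    rw [hsym x y]
    exact if_congr and_comm rfl rfl
  · -- total
    have : ∀ x, ∑ y, γ₁ x y = marginal γ₁ x := fun x => rfl
    calc (∑ x, ∑ y, γ₁ x y) = ∑ x, marginal γ₁ x := rfl
      _ = ∑ x : U × V, if x ∈ C then marginal γ x / t else 0 :=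
          Finset.sum_congr rfl fun x _ => hmar x
      _ = (∑ x : U × V, if x ∈ C then marginal γ x else 0) / t := by
          rw [Finset.sum_div]
          exact Finset.sum_congr rfl fun x _ => by
            by_cases hx : x ∈ C
            · rw [if_pos hx, if_pos hx]
            · rw [if_neg hx, if_neg hx, zero_div]
      _ = 1 := by rw [← htdef]; exact div_self ht0.ne'
  · -- marginal coupling U
    intro u
    have : (∑ v, marginal γ₁ (u, v)) = (∑ v, if (u, v) ∈ C then marginal γ (u, v) else 0) / t := by
      rw [Finset.sum_div]
      refine Finset.sum_congr rfl fun v _ => ?_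
      rw [hmar]
      by_cases hx : (u, v) ∈ C
      · rw [if_pos hx, if_pos hx]
      · rw [if_neg hx, if_neg hx, zero_div]
    rw [this, kU u, ← htdef, mul_comm, mul_div_assoc, div_self ht0.ne', mul_one]
  · -- marginal coupling V
    intro v
    have : (∑ u, marginal γ₁ (u, v)) = (∑ u, if (v, u) ∈ Cs then marginal γs (v, u) else 0) / t := by
      rw [Finset.sum_div]
      refine Finset.sum_congr rfl fun u _ => ?_
      rw [hmar]
      by_cases hx : (u, v) ∈ C
      · rw [if_pos hx, if_pos (show (v, u) ∈ Cs from hx), hmargs (v, u)]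
      · rw [if_neg hx, if_neg (show (v, u) ∉ Cs from hx), zero_div]
    rw [this, kV v, ← hts, mul_comm, mul_div_assoc, div_self ht0.ne', mul_one]
  · -- transition coupling U
    intro u u' v
    by_cases h : (u, v) ∈ C
    · have hsum : (∑ v', γ₁ (u, v) (u', v')) = (∑ v', γ (u, v) (u', v')) / t := by
        rw [Finset.sum_div]
        refine Finset.sum_congr rfl fun v' _ => ?_
        simp only [hγ₁]
        by_cases h' : (u', v') ∈ C
        · rw [if_pos ⟨h, h'⟩]
        · rw [if_neg (fun hh : _ ∈ C ∧ _ ∈ C => h' hh.2), hγ0 _ _ h h', zero_div]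
      rw [hsum, hmar, if_pos h, ← mul_div_assoc, ← mul_div_assoc, ht1 u u' v]
    · have hsum : (∑ v', γ₁ (u, v) (u', v')) = 0 :=
        Finset.sum_eq_zero fun v' _ => if_neg (fun hh => h hh.1)
      rw [hsum, hmar, if_neg h, mul_zero, mul_zero]
  · -- transition coupling V
    intro v v' u
    by_cases h : (u, v) ∈ C
    · have hsum : (∑ u', γ₁ (u, v) (u', v')) = (∑ u', γ (u, v) (u', v')) / t := by
        rw [Finset.sum_div]
        refine Finset.sum_congr rfl fun u' _ => ?_
        simp only [hγ₁]
        by_cases h' : (u', v') ∈ C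
        · rw [if_pos ⟨h, h'⟩]
        · rw [if_neg (fun hh : _ ∈ C ∧ _ ∈ C => h' hh.2), hγ0 _ _ h h', zero_div]
      rw [hsum, hmar, if_pos h, ← mul_div_assoc, ← mul_div_assoc, ht2 v v' u]
    · have hsum : (∑ u', γ₁ (u, v) (u', v')) = 0 :=
        Finset.sum_eq_zero fun u' _ => if_neg (fun hh => h hh.1)
      rw [hsum, hmar, if_neg h, mul_zero, mul_zero]

/-- If `G = (U,α)` and `H = (V,β)` are connected and `γ` is an
extreme point of `J(α,β)`, then the graph `K = (supp(r_γ), γ)` is connected: any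
two pairs of positive marginal are joined by a path of `γ`-positive edges. -/
theorem extreme_weightJoining_connected
    {U V : Type*} [Fintype U] [Fintype V]
    (α : U → U → ℝ) (β : V → V → ℝ)
    (hα : IsWeightFunction α) (hβ : IsWeightFunction β)
    (hGconn : IsConnectedWeight α) (hHconn : IsConnectedWeight β)
    (γ : U × V → U × V → ℝ)
    (hγ : IsExtremePointOf (weightJoinings α β) γ) :
    ∀ u u' : U, ∀ v v' : V, 0 < marginal γ (u, v) → 0 < marginal γ (u', v') →
      ∃ n, ∃ w : Fin (n + 1) → U × V, w 0 = (u, v) ∧ w (Fin.last n) = (u', v') ∧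
        ∀ i : Fin n, 0 < γ (w i.castSucc) (w i.succ) := by
  classical
  obtain ⟨hmem, hext⟩ := hγ
  have hJ : IsWeightJoining α β γ := hmem
  obtain ⟨⟨hnn, hsym, htot⟩, hm1, hm2, ht1, ht2⟩ := id hJ
  intro u u' v v' huv hu'v'
  set C : Set (U × V) := {x | Relation.ReflTransGen (fun a b => 0 < γ a b) (u, v) x} with hCdef
  by_cases hin : (u', v') ∈ C
  · exact exists_walk_of_reflTransGen hin
  exfalso
  have hC : ∀ x y : U × V, x ∈ C → 0 < γ x y → y ∈ C :=
    fun x y hx hxy => Relation.ReflTransGen.tail hx hxy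
  have hCc : ∀ x y : U × V, x ∈ Cᶜ → 0 < γ x y → y ∈ Cᶜ := by
    intro x y hx hxy hyC
    rw [hsym x y] at hxy
    exact hx (Relation.ReflTransGen.tail hyC hxy)
  have hrnn : ∀ x : U × V, 0 ≤ marginal γ x :=
    fun x => Finset.sum_nonneg fun y _ => hnn x y
  set t : ℝ := ∑ x : U × V, if x ∈ C then marginal γ x else 0 with htdef
  set t₂ : ℝ := ∑ x : U × V, if x ∈ Cᶜ then marginal γ x else 0 with ht₂def
  have hitenn : ∀ (D : Set (U × V)) (x : U × V), 0 ≤ (if x ∈ D then marginal γ x else 0) := by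
    intro D x
    by_cases h : x ∈ D
    · rw [if_pos h]; exact hrnn x
    · rw [if_neg h]
  have ht0 : 0 < t := by
    have huvC : (u, v) ∈ C := Relation.ReflTransGen.refl
    have hle : (if (u, v) ∈ C then marginal γ (u, v) else 0) ≤
        ∑ x : U × V, if x ∈ C then marginal γ x else 0 :=
      Finset.single_le_sum (f := fun x : U × V => if x ∈ C then marginal γ x else 0)
        (fun x _ => by
          by_cases h : x ∈ C
          · simpa [h] using hrnn x
          · simp [h]) (Finset.mem_univ (u, v))
    rw [if_pos huvC] at hle
    calc (0 : ℝ) < marginal γ (u, v) := huv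
      _ ≤ t := by rw [htdef]; exact hle
  have ht₂0 : 0 < t₂ := by
    have hle : (if (u', v') ∈ Cᶜ then marginal γ (u', v') else 0) ≤
        ∑ x : U × V, if x ∈ Cᶜ then marginal γ x else 0 :=
      Finset.single_le_sum (f := fun x : U × V => if x ∈ Cᶜ then marginal γ x else 0)
        (fun x _ => by
          by_cases h : x ∈ Cᶜ
          · simpa [h] using hrnn x
          · simp [h]) (Finset.mem_univ (u', v'))
    rw [if_pos (show (u', v') ∈ Cᶜ from hin)] at hle
    calc (0 : ℝ) < marginal γ (u', v') := hu'v'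
      _ ≤ t₂ := by rw [ht₂def]; exact hle
  have hsplit : t + t₂ = 1 := by
    rw [htdef, ht₂def, ← Finset.sum_add_distrib]
    calc (∑ x : U × V, ((if x ∈ C then marginal γ x else 0) + if x ∈ Cᶜ then marginal γ x else 0))
        = ∑ x : U × V, marginal γ x := by
          refine Finset.sum_congr rfl fun x _ => ?_
          by_cases hx : x ∈ C
          · rw [if_pos hx, if_neg (fun h : x ∈ Cᶜ => h hx), add_zero]
          · rw [if_neg hx, if_pos (show x ∈ Cᶜ from hx), zero_add]
      _ = 1 := htot
  have ht1' : t < 1 := by linarith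
  obtain ⟨hJ1, hmar₁⟩ := restrict_join α β hα hβ hGconn hHconn γ hJ C hC t rfl ht0
  obtain ⟨hJ2, hmar₂⟩ := restrict_join α β hα hβ hGconn hHconn γ hJ Cᶜ hCc t₂ rfl ht₂0
  set γ₁ : U × V → U × V → ℝ := fun x y => if x ∈ C ∧ y ∈ C then γ x y / t else 0 with hγ₁
  set γ₂ : U × V → U × V → ℝ := fun x y => if x ∈ Cᶜ ∧ y ∈ Cᶜ then γ x y / t₂ else 0 with hγ₂
  have hγ0 : ∀ x y : U × V, x ∈ C → y ∉ C → γ x y = 0 := by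
    intro x y hx hy
    by_contra h
    exact hy (hC x y hx (lt_of_le_of_ne (hnn x y) (Ne.symm h)))
  have heq : γ = t • γ₁ + (1 - t) • γ₂ := by
    funext x y
    have h1t : (1 : ℝ) - t = t₂ := by linarith
    simp only [Pi.add_apply, Pi.smul_apply, smul_eq_mul, hγ₁, hγ₂, h1t]
    by_cases hx : x ∈ C
    · by_cases hy : y ∈ C
      · rw [if_pos ⟨hx, hy⟩, if_neg (fun h : x ∈ Cᶜ ∧ y ∈ Cᶜ => h.1 hx), mul_zero, add_zero,
          mul_div_cancel₀ _ ht0.ne']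
      · rw [if_neg (fun h : x ∈ C ∧ y ∈ C => hy h.2),
          if_neg (fun h : x ∈ Cᶜ ∧ y ∈ Cᶜ => h.1 hx), mul_zero, mul_zero, add_zero,
          hγ0 x y hx hy]
    · by_cases hy : y ∈ C
      · rw [if_neg (fun h : x ∈ C ∧ y ∈ C => hx h.1),
          if_neg (fun h : x ∈ Cᶜ ∧ y ∈ Cᶜ => h.2 hy), mul_zero, mul_zero, add_zero]
        rw [hsym]
        exact hγ0 y x hy hx
      · rw [if_neg (fun h : x ∈ C ∧ y ∈ C => hx h.1), if_pos ⟨hx, hy⟩, mul_zero, zero_add,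
          mul_div_cancel₀ _ ht₂0.ne']
  obtain ⟨hg1, _⟩ := hext γ₁ hJ1 γ₂ hJ2 t ht0 ht1' heq
  have : marginal γ (u', v') = 0 := by
    rw [hg1, hmar₁ (u', v'), if_neg hin]
  rw [this] at hu'v'
  exact lt_irrefl 0 hu'v'
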